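/- arXiv:2204.02353 — 3 statements merged into one kernel-verified Lean document; each statement's English description precedes it below -/
import Mathlib

section
/- For every subspace A of a q-matroid (E,r), r(A) - r(cyc(A)) = dim(A) - dim(cyc(A)); equivalently, the nullity of A equals the nullity of cyc(A). -/
open Module Submodule

variable {K E : Type*} [Field K] [Fintype K] [AddCommGroup E] [Module K E]
  [FiniteDimensional K E]

/-- The dimension of a subspace, as an integer. -/
noncomputable def dimz {K E : Type*} [Field K] [AddCommGroup E] [Module K E]
    (A : Submodule K E) : ℤ :=
  (Module.finrank K ↥A : ℤ)

/-- `r` is the rank function of a `q`-matroid on `E`: axioms (R1)-(R3). -/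
def QMat {K E : Type*} [Field K] [AddCommGroup E] [Module K E]
    (r : Submodule K E → ℤ) : Prop :=
  (∀ A : Submodule K E, 0 ≤ r A ∧ r A ≤ dimz A) ∧
  (∀ A B : Submodule K E, A ≤ B → r A ≤ r B) ∧
  (∀ A B : Submodule K E, r (A ⊔ B) + r (A ⊓ B) ≤ r A + r B)

/-- A subspace is cyclic: every codimension-1 subspace has the same rank. -/
def QCyclic {K E : Type*} [Field K] [AddCommGroup E] [Module K E]
    (r : Submodule K E → ℤ) (A : Submodule K E) : Prop :=
  ∀ B ≤ A, Module.finrank K ↥A = Module.finrank K ↥B + 1 → r B = r A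

/-- The cyclic operator: sum of all one-dimensional `x ≤ A` with
`r (B ⊔ x) = r B` for all codimension-1 subspaces `B` of `A`. -/
noncomputable def qcyc {K E : Type*} [Field K] [AddCommGroup E] [Module K E]
    (r : Submodule K E → ℤ) (A : Submodule K E) : Submodule K E :=
  sSup {x : Submodule K E | x ≤ A ∧ Module.finrank K ↥x = 1 ∧
    ∀ B ≤ A, Module.finrank K ↥A = Module.finrank K ↥B + 1 → r (B ⊔ x) = r B}

/-- The closure operator: sum of all one-dimensional `x` with `r (A ⊔ x) = r A`. -/
noncomputable def qcl {K E : Type*} [Field K] [AddCommGroup E] [Module K E]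
    (r : Submodule K E → ℤ) (A : Submodule K E) : Submodule K E :=
  sSup {x : Submodule K E | Module.finrank K ↥x = 1 ∧ r (A ⊔ x) = r A}

/-- A subspace `F` is a flat: adding any one-dimensional space outside `F`
increases the rank. -/
def QFlat {K E : Type*} [Field K] [AddCommGroup E] [Module K E]
    (r : Submodule K E → ℤ) (F : Submodule K E) : Prop :=
  ∀ x : Submodule K E, Module.finrank K ↥x = 1 → ¬ x ≤ F → r F < r (F ⊔ x)

section Aux

variable {K' E' : Type*} [Field K'] [AddCommGroup E'] [Module K' E'] [FiniteDimensional K' E']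

/-- The set of rank-deficient hyperplanes of `A`, together with `A` itself. -/
def hypSet (r : Submodule K' E' → ℤ) (A : Submodule K' E') : Set (Submodule K' E') :=
  insert A {B : Submodule K' E' | B ≤ A ∧
    Module.finrank K' ↥A = Module.finrank K' ↥B + 1 ∧ r B ≠ r A}

lemma rank_sup_line_le {r : Submodule K' E' → ℤ} (hM : QMat r) (X x : Submodule K' E')
    (hx : Module.finrank K' ↥x = 1) : r (X ⊔ x) ≤ r X + 1 := by
  have h := hM.2.2 X x
  have h0 := (hM.1 (X ⊓ x)).1
  have h1 := (hM.1 x).2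
  have hd : dimz x = 1 := by rw [dimz, hx]; norm_num
  omega

lemma sup_line_eq_of_not_le {B x A : Submodule K' E'} (hB : B ≤ A)
    (hBh : Module.finrank K' ↥A = Module.finrank K' ↥B + 1)
    (hxA : x ≤ A) (hxB : ¬ x ≤ B) : B ⊔ x = A := by
  have hlt : B < B ⊔ x := lt_of_le_of_ne le_sup_left (fun h => hxB (h ▸ le_sup_right))
  have h1 : Module.finrank K' ↥B < Module.finrank K' ↥(B ⊔ x) :=
    Submodule.finrank_lt_finrank_of_lt hlt
  exact Submodule.eq_of_le_of_finrank_le (sup_le hB hxA) (by omega)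

lemma rank_le_succ_of_cov {r : Submodule K' E' → ℤ} (hM : QMat r) {X Y : Submodule K' E'}
    (hXY : X ≤ Y) (h : Module.finrank K' ↥Y = Module.finrank K' ↥X + 1) :
    r Y ≤ r X + 1 := by
  have hlt : X < Y := lt_of_le_of_ne hXY (by rintro rfl; omega)
  obtain ⟨v, hvY, hvX⟩ := SetLike.exists_of_lt hlt
  have hv0 : v ≠ 0 := fun h0 => hvX (h0 ▸ X.zero_mem)
  have hs : Module.finrank K' ↥(Submodule.span K' {v}) = 1 := finrank_span_singleton hv0
  have heq : X ⊔ Submodule.span K' {v} = Y :=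
    sup_line_eq_of_not_le hXY h ((Submodule.span_singleton_le_iff_mem v Y).2 hvY)
      (fun hle => hvX (hle (Submodule.mem_span_singleton_self v)))
  calc r Y = r (X ⊔ Submodule.span K' {v}) := by rw [heq]
    _ ≤ r X + 1 := rank_sup_line_le hM _ _ hs

lemma qcyc_eq_sInf (r : Submodule K' E' → ℤ) (A : Submodule K' E') :
    qcyc r A = sInf (hypSet r A) := by
  apply le_antisymm
  · apply sSup_le
    rintro x ⟨hxA, hx1, hx⟩
    apply le_sInf
    rintro B (rfl | ⟨hBA, hBh, hBr⟩)
    · exact hxA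
    · by_contra hxB
      have hsup : B ⊔ x = A := sup_line_eq_of_not_le hBA hBh hxA hxB
      exact hBr ((hx B hBA hBh).symm.trans (by rw [hsup]))
  · intro v hv
    rcases eq_or_ne v 0 with rfl | hv0
    · exact Submodule.zero_mem _
    have hvA : v ∈ A := Submodule.mem_sInf.1 hv A (Set.mem_insert _ _)
    refine (le_sSup ?_ : Submodule.span K' {v} ≤ _) (Submodule.mem_span_singleton_self v)
    refine ⟨(Submodule.span_singleton_le_iff_mem v A).2 hvA, finrank_span_singleton hv0, ?_⟩
    intro B hBA hBh
    by_cases hvB : v ∈ B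
    · rw [sup_eq_left.2 ((Submodule.span_singleton_le_iff_mem v B).2 hvB)]
    · have hBr : r B = r A := by
        by_contra hne
        exact hvB (Submodule.mem_sInf.1 hv B (Set.mem_insert_of_mem _ ⟨hBA, hBh, hne⟩))
      have hsup : B ⊔ Submodule.span K' {v} = A :=
        sup_line_eq_of_not_le hBA hBh ((Submodule.span_singleton_le_iff_mem v A).2 hvA)
          (fun hle => hvB (hle (Submodule.mem_span_singleton_self v)))
      rw [hsup, hBr]

lemma step_lemma {r : Submodule K' E' → ℤ} (hM : QMat r) {A B D : Submodule K' E'}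
    (hBA : B ≤ A) (hBh : Module.finrank K' ↥A = Module.finrank K' ↥B + 1)
    (hBr : r B ≠ r A) (hDA : D ≤ A) (hDB : ¬ D ≤ B) :
    Module.finrank K' ↥D = Module.finrank K' ↥(D ⊓ B) + 1 ∧ r (D ⊓ B) = r D - 1 := by
  have hrB : r B + 1 ≤ r A := lt_of_le_of_ne (hM.2.1 B A hBA) hBr
  have hsup : D ⊔ B = A := by
    have hlt : B < D ⊔ B := lt_of_le_of_ne le_sup_right (fun h => hDB (h ▸ le_sup_left))
    have h1 := Submodule.finrank_lt_finrank_of_lt hlt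
    exact Submodule.eq_of_le_of_finrank_le (sup_le hDA hBA) (by omega)
  have hdim := Submodule.finrank_sup_add_finrank_inf_eq D B
  rw [hsup] at hdim
  have hfin : Module.finrank K' ↥D = Module.finrank K' ↥(D ⊓ B) + 1 := by omega
  have hub : r (D ⊓ B) ≤ r D - 1 := by
    have h := hM.2.2 D B
    rw [hsup] at h
    omega
  have hlb := rank_le_succ_of_cov hM (inf_le_left : D ⊓ B ≤ D) hfin
  exact ⟨hfin, by omega⟩

lemma nullity_const {r : Submodule K' E' → ℤ} (hM : QMat r) (A : Submodule K' E') :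
    ∀ n (D : Submodule K' E'), Module.finrank K' ↥D = n → sInf (hypSet r A) ≤ D → D ≤ A →
      r D - dimz D = r (sInf (hypSet r A)) - dimz (sInf (hypSet r A)) := by
  intro n
  induction n using Nat.strong_induction_on with
  | _ n IH =>
    intro D hDn hCD hDA
    rcases eq_or_lt_of_le hCD with heq | hlt
    · rw [← heq]
    · obtain ⟨v, hvD, hvC⟩ := SetLike.exists_of_lt hlt
      obtain ⟨B, hBmem, hvB⟩ : ∃ B ∈ hypSet r A, v ∉ B := by
        by_contra h
        push_neg at h
        exact hvC (Submodule.mem_sInf.2 h)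
      rcases hBmem with rfl | ⟨hBA, hBh, hBr⟩
      · exact absurd (hDA hvD) hvB
      have hDB : ¬ D ≤ B := fun h => hvB (h hvD)
      obtain ⟨hfin, hrk⟩ := step_lemma hM hBA hBh hBr hDA hDB
      have hCDB : sInf (hypSet r A) ≤ D ⊓ B :=
        le_inf hCD (sInf_le (Set.mem_insert_of_mem _ ⟨hBA, hBh, hBr⟩))
      have h2 := IH (Module.finrank K' ↥(D ⊓ B)) (by omega) (D ⊓ B) rfl hCDB
        (le_trans inf_le_left hDA)
      rw [← h2]
      have : dimz D = dimz (D ⊓ B) + 1 := by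
        rw [dimz, dimz, hfin]; push_cast; ring
      omega

end Aux

/-- `r(A) - r(cyc(A)) = dim(A) - dim(cyc(A))`. -/
theorem rank_sub_rank_qcyc (r : Submodule K E → ℤ) (hM : QMat r)
    (A : Submodule K E) :
    r A - r (qcyc r A) = dimz A - dimz (qcyc r A) := by
  have h := nullity_const hM A (Module.finrank K ↥A) A rfl
    (sInf_le (Set.mem_insert _ _)) le_rfl
  rw [qcyc_eq_sInf]
  linarith
end

section
/- If F is a flat of a q-matroid, then cyc(F) is a cyclic flat. -/
set_option linter.unusedSectionVars false
set_option maxHeartbeats 1000000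



open Module Submodule

variable {K E : Type*} [Field K] [Fintype K] [AddCommGroup E] [Module K E]
  [FiniteDimensional K E]

lemma line_inf_eq_bot {x B : Submodule K E} (hx : Module.finrank K ↥x = 1)
    (h : ¬ x ≤ B) : x ⊓ B = ⊥ := by
  by_contra hne
  have h1 : 1 ≤ Module.finrank K ↥(x ⊓ B) := by
    obtain ⟨v, hv⟩ := Submodule.exists_mem_ne_zero_of_ne_bot hne
    have h1' : Module.finrank K ↥(Submodule.span K {v}) = 1 :=
      finrank_span_singleton hv.2
    calc 1 = Module.finrank K ↥(Submodule.span K {v}) := h1'.symm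
    _ ≤ Module.finrank K ↥(x ⊓ B) := Submodule.finrank_mono
        ((Submodule.span_singleton_le_iff_mem _ _).mpr hv.1)
  have : x ⊓ B = x := Submodule.eq_of_le_of_finrank_le inf_le_left (hx ▸ h1)
  exact h (this ▸ inf_le_right)

lemma finrank_sup_line {x B : Submodule K E} (hx : Module.finrank K ↥x = 1)
    (h : ¬ x ≤ B) : Module.finrank K ↥(B ⊔ x) = Module.finrank K ↥B + 1 := by
  have := Submodule.finrank_sup_add_finrank_inf_eq B x
  rw [inf_comm, line_inf_eq_bot hx h, finrank_bot] at this
  omega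

lemma exists_line_not_le {A B : Submodule K E} (h : ¬ A ≤ B) :
    ∃ x : Submodule K E, Module.finrank K ↥x = 1 ∧ x ≤ A ∧ ¬ x ≤ B := by
  rcases SetLike.not_le_iff_exists.mp h with ⟨a, haA, haB⟩
  have ha0 : a ≠ 0 := fun h0 => haB (h0 ▸ B.zero_mem)
  refine ⟨Submodule.span K {a}, finrank_span_singleton ha0, ?_, ?_⟩
  · exact (Submodule.span_singleton_le_iff_mem _ _).mpr haA
  · exact fun hle => haB (hle (Submodule.mem_span_singleton_self a))

section Rank
variable {r : Submodule K E → ℤ} (hM : QMat r)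
include hM

lemma r_sup_line_le {x : Submodule K E} (hx : Module.finrank K ↥x = 1)
    (B : Submodule K E) : r (B ⊔ x) ≤ r B + 1 := by
  have hsub := hM.2.2 B x
  have h0 := (hM.1 (B ⊓ x)).1
  have h1 := (hM.1 x).2
  have : dimz x = 1 := by simp [dimz, hx]
  linarith [this ▸ h1]

/-- unit increase along chains -/
lemma r_chain_le : ∀ (d : ℕ) (B A' : Submodule K E), B ≤ A' →
    Module.finrank K ↥A' ≤ Module.finrank K ↥B + d → r A' ≤ r B + d := by
  intro d
  induction d with
  | zero =>
    intro B A' hle hfr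
    have : B = A' := Submodule.eq_of_le_of_finrank_le hle (by omega)
    simp [this]
  | succ d ih =>
    intro B A' hle hfr
    by_cases h : Module.finrank K ↥A' ≤ Module.finrank K ↥B + d
    · have := ih B A' hle h; push_cast; push_cast at this; linarith
    · have hne : ¬ A' ≤ B := by
        intro hba
        have := Submodule.finrank_mono hba
        omega
      obtain ⟨x, hx1, hxA, hxB⟩ := exists_line_not_le hne
      have hBx : B ⊔ x ≤ A' := sup_le hle hxA
      have hfr2 : Module.finrank K ↥(B ⊔ x) = Module.finrank K ↥B + 1 :=
        finrank_sup_line hx1 hxB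
      have h1 : r (B ⊔ x) ≤ r B + 1 := r_sup_line_le hM hx1 B
      have h2 : r A' ≤ r (B ⊔ x) + d := ih _ _ hBx (by omega)
      push_cast at h2 ⊢
      linarith only [h1, h2]

end Rank

/-- extend B inside A to a hyperplane of A avoiding the line x -/
lemma ext_avoid : ∀ (d : ℕ) (A B x : Submodule K E), B ≤ A → x ≤ A →
    Module.finrank K ↥x = 1 → ¬ x ≤ B →
    Module.finrank K ↥A ≤ Module.finrank K ↥B + 1 + d →
    ∃ H, B ≤ H ∧ H ≤ A ∧ Module.finrank K ↥H + 1 = Module.finrank K ↥A ∧ ¬ x ≤ H := by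
  intro d
  induction d with
  | zero =>
    intro A B x hBA hxA hx1 hxB hfr
    have hlt : B < A := lt_of_le_of_ne hBA (fun h => hxB (h ▸ hxA))
    have := Submodule.finrank_lt_finrank_of_lt hlt
    exact ⟨B, le_rfl, hBA, by omega, hxB⟩
  | succ d ih =>
    intro A B x hBA hxA hx1 hxB hfr
    by_cases h : Module.finrank K ↥A ≤ Module.finrank K ↥B + 1 + d
    · exact ih A B x hBA hxA hx1 hxB h
    · have hBx : B ⊔ x ≤ A := sup_le hBA hxA
      have hfr2 : Module.finrank K ↥(B ⊔ x) = Module.finrank K ↥B + 1 :=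
        finrank_sup_line hx1 hxB
      have hne : ¬ A ≤ B ⊔ x := by
        intro hba
        have := Submodule.finrank_mono hba
        omega
      obtain ⟨z, hz1, hzA, hzBx⟩ := exists_line_not_le hne
      have hzB : ¬ z ≤ B := fun h' => hzBx (h'.trans le_sup_left)
      have hfr3 : Module.finrank K ↥(B ⊔ z) = Module.finrank K ↥B + 1 :=
        finrank_sup_line hz1 hzB
      have hxBz : ¬ x ≤ B ⊔ z := by
        intro hxz
        have hle2 : B ⊔ x ≤ B ⊔ z := sup_le le_sup_left hxz
        have : B ⊔ x = B ⊔ z := Submodule.eq_of_le_of_finrank_le hle2 (by omega)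
        exact hzBx (this ▸ le_sup_right)
      obtain ⟨H, h1, h2, h3, h4⟩ := ih A (B ⊔ z) x (sup_le hBA hzA) hxA hx1 hxBz (by omega)
      exact ⟨H, le_sup_left.trans h1, h2, h3, h4⟩

def Sset (r : Submodule K E → ℤ) (A : Submodule K E) : Set (Submodule K E) :=
  {x : Submodule K E | x ≤ A ∧ Module.finrank K ↥x = 1 ∧
    ∀ B ≤ A, Module.finrank K ↥A = Module.finrank K ↥B + 1 → r (B ⊔ x) = r B}

lemma qcyc_eq_sSup (r : Submodule K E → ℤ) (A : Submodule K E) :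
    qcyc r A = sSup (Sset r A) := rfl

lemma qcyc_le (r : Submodule K E → ℤ) (A : Submodule K E) : qcyc r A ≤ A :=
  sSup_le fun _ hx => hx.1

lemma exists_S_not_le {r : Submodule K E → ℤ} {A B : Submodule K E}
    (h : ¬ qcyc r A ≤ B) : ∃ x ∈ Sset r A, ¬ x ≤ B := by
  by_contra h'
  push_neg at h'
  exact h (sSup_le h')

section Main
variable {r : Submodule K E → ℤ} (hM : QMat r)
include hM

lemma Sset_hyperplane_eq {A H : Submodule K E} (hHA : H ≤ A)
    (hfrH : Module.finrank K ↥A = Module.finrank K ↥H + 1)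
    (hrH : r H = r A - 1) (hDH : qcyc r A ≤ H) :
    Sset r H = Sset r A := by
  ext x
  constructor
  · rintro ⟨hxH, hx1, hcond⟩
    refine ⟨hxH.trans hHA, hx1, ?_⟩
    intro Kk hKA hfrK
    by_cases hxK : x ≤ Kk
    · rw [sup_eq_left.mpr hxK]
    · have hHK : ¬ H ≤ Kk := fun h => hxK (hxH.trans h)
      have hKlt : Kk < Kk ⊔ H :=
        lt_of_le_of_ne le_sup_left (fun h => hHK (h ▸ le_sup_right))
      have hKHA : Kk ⊔ H = A := by
        have hlt := Submodule.finrank_lt_finrank_of_lt hKlt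
        exact Submodule.eq_of_le_of_finrank_le (sup_le hKA hHA) (by omega)
      have hsum := Submodule.finrank_sup_add_finrank_inf_eq Kk H
      rw [hKHA] at hsum
      have hfrB : Module.finrank K ↥H = Module.finrank K ↥(Kk ⊓ H) + 1 := by omega
      have hxB : ¬ x ≤ Kk ⊓ H := fun h => hxK (h.trans inf_le_left)
      have hre : r ((Kk ⊓ H) ⊔ x) = r (Kk ⊓ H) := hcond (Kk ⊓ H) inf_le_right hfrB
      have hBxH : (Kk ⊓ H) ⊔ x = H := by
        refine Submodule.eq_of_le_of_finrank_le (sup_le inf_le_right hxH) ?_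
        rw [finrank_sup_line hx1 hxB]; omega
      rw [hBxH] at hre
      have hsub := hM.2.2 Kk H
      rw [hKHA, ← hre] at hsub
      have hmono : r Kk ≤ r A := hM.2.1 _ _ hKA
      have hKx : Kk ⊔ x = A := by
        refine Submodule.eq_of_le_of_finrank_le (sup_le hKA (hxH.trans hHA)) ?_
        rw [finrank_sup_line hx1 hxK]; omega
      rw [hKx]; omega
  · intro hx
    obtain ⟨hxA, hx1, hcond⟩ := id hx
    have hxH : x ≤ H := (le_sSup hx).trans hDH
    refine ⟨hxH, hx1, ?_⟩
    intro B hBH hfrB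
    by_cases hxB : x ≤ B
    · rw [sup_eq_left.mpr hxB]
    · have hBA : B ≤ A := hBH.trans hHA
      obtain ⟨Kk, hBK, hKA, hfrK, hxK⟩ :=
        ext_avoid (Module.finrank K ↥A) A B x hBA hxA hx1 hxB (by omega)
      have hrKx : r (Kk ⊔ x) = r Kk := hcond Kk hKA (by omega)
      have hKxA : Kk ⊔ x = A := by
        refine Submodule.eq_of_le_of_finrank_le (sup_le hKA hxA) ?_
        rw [finrank_sup_line hx1 hxK]; omega
      have hrK : r Kk = r A := by rw [← hKxA, hrKx]
      have hchain : r Kk ≤ r B + (1 : ℕ) := r_chain_le hM 1 B Kk hBK (by omega)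
      have hmono1 : r B ≤ r (B ⊔ x) := hM.2.1 _ _ le_sup_left
      have hmono2 : r (B ⊔ x) ≤ r H := hM.2.1 _ _ (sup_le hBH hxH)
      push_cast at hchain
      omega

lemma nullity_qcyc : ∀ (n : ℕ) (A : Submodule K E), Module.finrank K ↥A ≤ n →
    dimz A - r A ≤ dimz (qcyc r A) - r (qcyc r A) := by
  intro n
  induction n with
  | zero =>
    intro A hA
    have hbot : A = ⊥ := Submodule.finrank_eq_zero.mp (by omega)
    have hq : qcyc r A = A := le_antisymm (qcyc_le r A) (hbot ▸ bot_le)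
    rw [hq]
  | succ n ih =>
    intro A hA
    by_cases hDA : qcyc r A = A
    · rw [hDA]
    · have hDle : qcyc r A ≤ A := qcyc_le r A
      have hAD : ¬ A ≤ qcyc r A := fun h => hDA (le_antisymm hDle h)
      have hy : ∃ y : Submodule K E, Module.finrank K ↥y = 1 ∧ y ≤ A ∧ y ∉ Sset r A := by
        by_contra h
        push_neg at h
        apply hAD
        intro a ha
        by_cases ha0 : a = 0
        · simp [ha0]
        · have h1 : Module.finrank K ↥(Submodule.span K {a}) = 1 :=
            finrank_span_singleton ha0
          have hmem : Submodule.span K {a} ∈ Sset r A :=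
            h _ h1 ((Submodule.span_singleton_le_iff_mem _ _).mpr ha)
          exact le_sSup hmem (Submodule.mem_span_singleton_self a)
      obtain ⟨y, hy1, hyA, hyS⟩ := hy
      have hw : ∃ B, B ≤ A ∧ Module.finrank K ↥A = Module.finrank K ↥B + 1 ∧
          r (B ⊔ y) ≠ r B := by
        by_contra h
        push_neg at h
        exact hyS ⟨hyA, hy1, fun B hBA hfr => h B hBA hfr⟩
      obtain ⟨H, hHA, hfrH, hne⟩ := hw
      have hyH : ¬ y ≤ H := fun h => hne (by rw [sup_eq_left.mpr h])
      have hHyA : H ⊔ y = A := by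
        refine Submodule.eq_of_le_of_finrank_le (sup_le hHA hyA) ?_
        rw [finrank_sup_line hy1 hyH]; omega
      have hneA : r A ≠ r H := by rw [← hHyA]; exact fun h => hne h
      have hrHA : r H = r A - 1 := by
        have h1 : r H ≤ r A := hM.2.1 _ _ hHA
        have h2 : r A ≤ r H + 1 := by rw [← hHyA]; exact r_sup_line_le hM hy1 H
        omega
      have hDH : qcyc r A ≤ H := by
        by_contra h
        obtain ⟨x, hxS, hxH⟩ := exists_S_not_le h
        have hcx := hxS.2.2 H hHA hfrH
        have hHxA : H ⊔ x = A := by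
          refine Submodule.eq_of_le_of_finrank_le (sup_le hHA hxS.1) ?_
          rw [finrank_sup_line hxS.2.1 hxH]; omega
        rw [hHxA] at hcx
        exact hneA hcx
      have hSeq : Sset r H = Sset r A := Sset_hyperplane_eq hM hHA hfrH hrHA hDH
      have hqeq : qcyc r H = qcyc r A := by
        rw [qcyc_eq_sSup, qcyc_eq_sSup, hSeq]
      have ihH := ih H (by omega)
      rw [← hqeq]
      have hd : dimz H = dimz A - 1 := by simp only [dimz]; omega
      omega

end Main

section Main2
variable {r : Submodule K E → ℤ} (hM : QMat r)
include hM

lemma qcyc_cyclic (A : Submodule K E) : QCyclic r (qcyc r A) := by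
  intro B hBD hfr
  have hDA := qcyc_le r A
  have hBne : ¬ qcyc r A ≤ B := fun h => by
    have := Submodule.finrank_mono h; omega
  obtain ⟨x, hxS, hxB⟩ := exists_S_not_le hBne
  have hBA : B ≤ A := hBD.trans hDA
  obtain ⟨H, hBH, hHA, hfrH, hxH⟩ :=
    ext_avoid (Module.finrank K ↥A) A B x hBA hxS.1 hxS.2.1 hxB (by omega)
  have hrHx := hxS.2.2 H hHA (by omega)
  have hHxA : H ⊔ x = A := by
    refine Submodule.eq_of_le_of_finrank_le (sup_le hHA hxS.1) ?_
    rw [finrank_sup_line hxS.2.1 hxH]; omega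
  have hrH : r H = r A := by rw [← hHxA]; exact hrHx.symm
  have hDfr : Module.finrank K ↥(qcyc r A) ≤ Module.finrank K ↥A :=
    Submodule.finrank_mono hDA
  have hchain : r H ≤ r B + ((Module.finrank K ↥A - Module.finrank K ↥(qcyc r A) : ℕ) : ℤ) :=
    r_chain_le hM _ B H hBH (by omega)
  have hnul := nullity_qcyc hM (Module.finrank K ↥A) A le_rfl
  have hmono : r B ≤ r (qcyc r A) := hM.2.1 _ _ hBD
  simp only [dimz] at hnul
  omega

lemma qcyc_flat {F : Submodule K E} (hF : QFlat r F) : QFlat r (qcyc r F) := by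
  intro x hx1 hxD
  have hDF := qcyc_le r F
  by_contra hcon
  push_neg at hcon
  have hEq : r (qcyc r F ⊔ x) = r (qcyc r F) :=
    le_antisymm hcon (hM.2.1 _ _ le_sup_left)
  by_cases hxF : x ≤ F
  · have hxS : x ∉ Sset r F := fun h => hxD (le_sSup h)
    have hw : ∃ B, B ≤ F ∧ Module.finrank K ↥F = Module.finrank K ↥B + 1 ∧
        r (B ⊔ x) ≠ r B := by
      by_contra h
      push_neg at h
      exact hxS ⟨hxF, hx1, fun B hBA hfr => h B hBA hfr⟩
    obtain ⟨Kk, hKF, hfrK, hne⟩ := hw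
    have hxK : ¬ x ≤ Kk := fun h => hne (by rw [sup_eq_left.mpr h])
    have hKxF : Kk ⊔ x = F := by
      refine Submodule.eq_of_le_of_finrank_le (sup_le hKF hxF) ?_
      rw [finrank_sup_line hx1 hxK]; omega
    have hrKF : r Kk ≠ r F := fun h => hne (by rw [hKxF, h])
    have hDK : qcyc r F ≤ Kk := by
      by_contra h
      obtain ⟨z, hzS, hzK⟩ := exists_S_not_le h
      have hcz := hzS.2.2 Kk hKF hfrK
      have hzF : Kk ⊔ z = F := by
        refine Submodule.eq_of_le_of_finrank_le (sup_le hKF hzS.1) ?_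
        rw [finrank_sup_line hzS.2.1 hzK]; omega
      rw [hzF] at hcz
      exact hrKF hcz.symm
    have hsub := hM.2.2 Kk (qcyc r F ⊔ x)
    have hsup : Kk ⊔ (qcyc r F ⊔ x) = F := by
      rw [← sup_assoc, sup_eq_left.mpr hDK, hKxF]
    have hinf : Kk ⊓ (qcyc r F ⊔ x) = qcyc r F := by
      rw [inf_comm, sup_inf_assoc_of_le x hDK, line_inf_eq_bot hx1 hxK, sup_bot_eq]
    rw [hsup, hinf, hEq] at hsub
    have hmK : r Kk ≤ r F := hM.2.1 _ _ hKF
    omega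
  · have hsub := hM.2.2 F (qcyc r F ⊔ x)
    have hsup : F ⊔ (qcyc r F ⊔ x) = F ⊔ x := by
      rw [← sup_assoc, sup_eq_left.mpr hDF]
    have hinf : F ⊓ (qcyc r F ⊔ x) = qcyc r F := by
      rw [inf_comm, sup_inf_assoc_of_le x hDF, line_inf_eq_bot hx1 hxF, sup_bot_eq]
    rw [hsup, hinf, hEq] at hsub
    have := hF x hx1 hxF
    omega

end Main2


/-- the cyclic core of a flat is a cyclic flat. -/
theorem qcyc_of_flat_is_cyclic_flat (r : Submodule K E → ℤ) (hM : QMat r)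
    (F : Submodule K E) (hF : QFlat r F) :
    QFlat r (qcyc r F) ∧ QCyclic r (qcyc r F) :=
  ⟨qcyc_flat hM hF, qcyc_cyclic hM F⟩
end

section
/- Let (E,r) be a q-matroid and Z a collection of subspaces of E closed under the lattice operations with ranks satisfying (Z1)-(Z3). Then the function r_Z(A) := min{ r(F) + dim((A+F)/F) : F ∈ Z } satisfies the rank axioms (R1)-(R3), so (E, r_Z) is a q-matroid. -/
open Module Submodule

variable {K E : Type*} [Field K] [Fintype K] [AddCommGroup E] [Module K E]
  [FiniteDimensional K E]

set_option linter.unusedSectionVars false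

lemma dimz_mono {A B : Submodule K E} (h : A ≤ B) : dimz A ≤ dimz B := by
  unfold dimz; exact_mod_cast Submodule.finrank_mono h

lemma dimz_nonneg (A : Submodule K E) : 0 ≤ dimz A := by
  unfold dimz; exact_mod_cast Nat.zero_le _

lemma dimz_sup_inf (A B : Submodule K E) :
    dimz (A ⊔ B) + dimz (A ⊓ B) = dimz A + dimz B := by
  unfold dimz
  exact_mod_cast Submodule.finrank_sup_add_finrank_inf_eq A B

lemma le_qcl (r : Submodule K E → ℤ) (A : Submodule K E) : A ≤ qcl r A := by
  intro v hv
  by_cases h0 : v = 0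
  · simp [h0]
  · have hx : span K {v} ∈ {x : Submodule K E | Module.finrank K ↥x = 1 ∧
        r (A ⊔ x) = r A} := by
      refine ⟨finrank_span_singleton h0, ?_⟩
      rw [sup_eq_left.mpr ((span_singleton_le_iff_mem v A).mpr hv)]
    exact le_sSup hx (mem_span_singleton_self v)

/-- if `Z` is closed under the lattice operations and satisfies
(Z1)-(Z3), then `r_Z(A) = min { r F + dim((A+F)/F) : F ∈ Z }` satisfies the
rank axioms (R1)-(R3), i.e. `(E, r_Z)` is a `q`-matroid. -/
theorem rZ_is_qmatroid (r : Submodule K E → ℤ) (hM : QMat r)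
    (Z : Set (Submodule K E))
    (hclosed : ∀ F ∈ Z, ∀ G ∈ Z, qcl r (F ⊔ G) ∈ Z ∧ qcyc r (F ⊓ G) ∈ Z)
    (Z0 : Submodule K E) (hZ0 : Z0 ∈ Z) (hZ0min : ∀ F ∈ Z, Z0 ≤ F)
    (hZ1 : r Z0 = 0)
    (hZ2 : ∀ F ∈ Z, ∀ G ∈ Z, G < F →
      0 < r F - r G ∧ r F - r G < dimz F - dimz G)
    (hZ3 : ∀ F ∈ Z, ∀ G ∈ Z,
      r (qcl r (F ⊔ G)) + r (qcyc r (F ⊓ G)) +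
        (dimz (F ⊓ G) - dimz (qcyc r (F ⊓ G))) ≤ r F + r G) :
    QMat (fun A : Submodule K E =>
      sInf ((fun F => r F + (dimz (A ⊔ F) - dimz F)) '' Z)) := by

  have hne : ∀ X : Submodule K E,
      ((fun F => r F + (dimz (X ⊔ F) - dimz F)) '' Z).Nonempty :=
    fun X => ⟨_, Z0, hZ0, rfl⟩
  have hbdd : ∀ X : Submodule K E,
      0 ∈ lowerBounds ((fun F => r F + (dimz (X ⊔ F) - dimz F)) '' Z) := by
    rintro X _ ⟨F, hF, rfl⟩
    have h1 := (hM.1 F).1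
    have h2 : dimz F ≤ dimz (X ⊔ F) := dimz_mono le_sup_right
    dsimp only
    linarith
  have hle : ∀ X : Submodule K E, ∀ F ∈ Z,
      sInf ((fun F => r F + (dimz (X ⊔ F) - dimz F)) '' Z) ≤
        r F + (dimz (X ⊔ F) - dimz F) :=
    fun X F hF => csInf_le ⟨0, hbdd X⟩ ⟨F, hF, rfl⟩
  refine ⟨fun A => ⟨?_, ?_⟩, fun A B hAB => ?_, fun A B => ?_⟩
  · exact le_csInf (hne A) fun b hb => hbdd A hb
  · have h1 := hle A Z0 hZ0
    have h2 := dimz_sup_inf A Z0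
    have h3 := dimz_nonneg (A ⊓ Z0)
    dsimp only at h1 ⊢
    linarith
  · refine le_csInf (hne B) ?_
    rintro b ⟨F, hF, rfl⟩
    have h1 := hle A F hF
    have h2 : dimz (A ⊔ F) ≤ dimz (B ⊔ F) := dimz_mono (sup_le_sup_right hAB F)
    dsimp only at h1 ⊢
    linarith
  · dsimp only
    obtain ⟨F, hF, hFval⟩ := Int.csInf_mem (hne A) ⟨0, hbdd A⟩
    obtain ⟨G, hG, hGval⟩ := Int.csInf_mem (hne B) ⟨0, hbdd B⟩
    dsimp only at hFval hGval
    have hF'Z := (hclosed F hF G hG).1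
    have hG'Z := (hclosed F hF G hG).2
    have key := hZ3 F hF G hG
    have h1 := hle (A ⊔ B) _ hF'Z
    have h2 := hle (A ⊓ B) _ hG'Z
    -- h1 h2 already beta-reduced
    have hsub : F ⊔ G ≤ qcl r (F ⊔ G) := le_qcl r (F ⊔ G)
    have hsub2 : qcyc r (F ⊓ G) ≤ F ⊓ G := qcyc_le r (F ⊓ G)
    -- dimension estimate for the closure part
    have e1 : (A ⊔ B ⊔ (F ⊔ G)) ⊔ qcl r (F ⊔ G) = A ⊔ B ⊔ qcl r (F ⊔ G) := by
      rw [sup_assoc, sup_assoc, sup_eq_right.mpr hsub, ← sup_assoc]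
    have d1 := dimz_sup_inf (A ⊔ B ⊔ (F ⊔ G)) (qcl r (F ⊔ G))
    rw [e1] at d1
    have m1 : dimz (F ⊔ G) ≤ dimz ((A ⊔ B ⊔ (F ⊔ G)) ⊓ qcl r (F ⊔ G)) :=
      dimz_mono (le_inf le_sup_right hsub)
    -- dimension estimate for the cyclic part
    have m2 : dimz ((A ⊓ B) ⊔ qcyc r (F ⊓ G)) ≤ dimz ((A ⊓ B) ⊔ (F ⊓ G)) :=
      dimz_mono (sup_le_sup_left hsub2 _)
    -- the key lattice inequality
    have hkey : (A ⊓ B) ⊔ (F ⊓ G) ≤ (A ⊔ F) ⊓ (B ⊔ G) :=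
      sup_le (le_inf (le_trans inf_le_left le_sup_left)
          (le_trans inf_le_right le_sup_left))
        (le_inf (le_trans inf_le_left le_sup_right)
          (le_trans inf_le_right le_sup_right))
    have m3 : dimz ((A ⊓ B) ⊔ (F ⊓ G)) ≤ dimz ((A ⊔ F) ⊓ (B ⊔ G)) :=
      dimz_mono hkey
    have d2 := dimz_sup_inf (A ⊔ F) (B ⊔ G)
    have d3 := dimz_sup_inf F G
    have e2 : (A ⊔ F) ⊔ (B ⊔ G) = A ⊔ B ⊔ (F ⊔ G) := sup_sup_sup_comm A F B G
    rw [e2] at d2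
    linarith
end
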